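/- Assume: Ψ(r,R) = ψ₃₀r³ + ψ₂₁r²R + ψ₁₂rR² + ψ₀₃R³ + o((|r|+|R|)³) and ∂Ψ/∂r(r,R) = 3ψ₃₀r² + 2ψ₂₁rR + ψ₁₂R² + o((|r|+|R|)²) as (r,R)→(0,0), with ψ₃₀ > 0; Y(r,R) = 1 + y₂₀r² + y₁₁rR + y₀₂R² + o((|r|+|R|)²); Q(r) = q₀r³ + o(r³) and Q'(r) = 3q₀r² + o(r²) as r→0⁺, with q₀ ≠ 0. Define Ψ₁ := Ψ − Q²/(2R), Y₁ := (1 − QQ'/(R·∂Ψ/∂r))·Y, and u₁² := 2Ψ₁/R − 1 + Y₁². Let k ∈ (0,1] be such that D(k) := 3ψ₃₀ + 2kψ₂₁ + k²ψ₁₂ > 0. Then lim_{r→0⁺} (kr)·u₁²(r,kr)/r³ = 2A(k)/D(k), where A(k) := −3q₀² + (k²ψ₁₂ + 2kψ₂₁ + 3ψ₃₀)·(k³ψ₀₃ + k³y₀₂ + k²ψ₁₂ + k²y₁₁ + kψ₂₁ + ky₂₀ + ψ₃₀). -/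

import Mathlib

open Filter Topology Asymptotics

/-- The charged velocity function
`u₁²(r,R) = 2Ψ₁/R − 1 + Y₁²`, with `Ψ₁ = Ψ − Q²/(2R)` and
`Y₁ = (1 − QQ'/(R·∂Ψ/∂r))·Y`. -/
noncomputable def u1sq (Ψ Ψr Y : ℝ → ℝ → ℝ) (Q Q' : ℝ → ℝ) (r R : ℝ) : ℝ :=
  2 * (Ψ r R - Q r ^ 2 / (2 * R)) / R - 1
    + ((1 - Q r * Q' r / (R * Ψr r R)) * Y r R) ^ 2

/-- The polynomial `A(k)` of the paper (eq. (4.13)). -/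
def Apoly (ψ30 ψ21 ψ12 ψ03 y20 y11 y02 q0 k : ℝ) : ℝ :=
  -3*q0^2 + (k^2*ψ12 + 2*k*ψ21 + 3*ψ30) *
    (k^3*ψ03 + k^3*y02 + k^2*ψ12 + k^2*y11 + k*ψ21 + k*y20 + ψ30)

set_option maxHeartbeats 2000000 in
/-- Behavior of `R·u₁²` along the rays `R = k r` in the case `p = 1`:
`(kr)·u₁²(r,kr) = (2A(k)/D(k))·r³ + o(r³)` where `D(k) = 3ψ₃₀ + 2kψ₂₁ + k²ψ₁₂`. -/
theorem ray_limit_u1sq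
    (Ψ Ψr Y : ℝ → ℝ → ℝ) (Q Q' : ℝ → ℝ)
    (ψ30 ψ21 ψ12 ψ03 y20 y11 y02 q0 : ℝ)
    (hψ30 : 0 < ψ30) (hq0 : q0 ≠ 0)
    (hlink : ∀ r R, HasDerivAt (fun s => Ψ s R) (Ψr r R) r)
    (hQd : ∀ r, HasDerivAt Q (Q' r) r)
    (hΨ : (fun q : ℝ × ℝ =>
        Ψ q.1 q.2 - (ψ30*q.1^3 + ψ21*q.1^2*q.2 + ψ12*q.1*q.2^2 + ψ03*q.2^3))
      =o[nhds ((0:ℝ), (0:ℝ))] fun q : ℝ × ℝ => (|q.1| + |q.2|)^3)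
    (hΨr : (fun q : ℝ × ℝ =>
        Ψr q.1 q.2 - (3*ψ30*q.1^2 + 2*ψ21*q.1*q.2 + ψ12*q.2^2))
      =o[nhds ((0:ℝ), (0:ℝ))] fun q : ℝ × ℝ => (|q.1| + |q.2|)^2)
    (hY : (fun q : ℝ × ℝ =>
        Y q.1 q.2 - (1 + y20*q.1^2 + y11*q.1*q.2 + y02*q.2^2))
      =o[nhds ((0:ℝ), (0:ℝ))] fun q : ℝ × ℝ => (|q.1| + |q.2|)^2)
    (hQ : (fun r : ℝ => Q r - q0 * r^3) =o[𝓝[>] (0:ℝ)] fun r : ℝ => r^3)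
    (hQ' : (fun r : ℝ => Q' r - 3 * q0 * r^2) =o[𝓝[>] (0:ℝ)] fun r : ℝ => r^2)
    (k : ℝ) (hk : k ∈ Set.Ioc (0:ℝ) 1)
    (hD : 0 < 3*ψ30 + 2*k*ψ21 + k^2*ψ12) :
    Tendsto (fun r : ℝ => (k*r) * u1sq Ψ Ψr Y Q Q' r (k*r) / r^3)
      (𝓝[>] (0:ℝ))
      (𝓝 (2 * Apoly ψ30 ψ21 ψ12 ψ03 y20 y11 y02 q0 k /
        (3*ψ30 + 2*k*ψ21 + k^2*ψ12))) := by
  obtain ⟨hk0, hk1⟩ := hk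
  set D : ℝ := 3*ψ30 + 2*k*ψ21 + k^2*ψ12 with hDdef
  set C : ℝ := ψ30 + k*ψ21 + k^2*ψ12 + k^3*ψ03 with hCdef
  set E : ℝ := y20 + k*y11 + k^2*y02 with hEdef
  have hkne : k ≠ 0 := ne_of_gt hk0
  have hDne : D ≠ 0 := ne_of_gt hD
  set l : Filter ℝ := 𝓝[>] (0:ℝ) with hl
  have hrpos : ∀ᶠ r in l, 0 < r := self_mem_nhdsWithin
  have hmap : Tendsto (fun r : ℝ => (r, k*r)) l (𝓝 ((0:ℝ),(0:ℝ))) := by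
    have h1 : ContinuousAt (fun r : ℝ => (r, k*r)) 0 := by fun_prop
    have h2 := h1.tendsto
    simp only [mul_zero] at h2
    exact h2.mono_left nhdsWithin_le_nhds
  -- generic bound transfer
  have hbd : ∀ n : ℕ, (fun r : ℝ => (|r| + |k*r|)^n) =O[l] (fun r => r^n) := by
    intro n
    apply IsBigO.of_bound ((1+k)^n)
    filter_upwards [hrpos] with r hr
    have h1 : |r| = r := abs_of_pos hr
    have h2 : |k*r| = k*r := abs_of_pos (mul_pos hk0 hr)
    rw [h1, h2]
    have : (r + k*r)^n = (1+k)^n * r^n := by rw [← mul_pow]; ring_nf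
    rw [Real.norm_eq_abs, Real.norm_eq_abs, abs_pow, abs_pow, h1,
      abs_of_pos (by positivity : (0:ℝ) < r + k*r), this]
  -- ratio limits
  have ha : Tendsto (fun r => Ψ r (k*r) / r^3) l (𝓝 C) := by
    have h1 := (hΨ.comp_tendsto hmap).trans_isBigO (hbd 3)
    have h2 := h1.tendsto_div_nhds_zero
    have h3 := h2.add (tendsto_const_nhds (x := C))
    rw [zero_add] at h3
    refine h3.congr' ?_
    filter_upwards [hrpos] with r hr
    have hr3 : r^3 ≠ 0 := by positivity
    simp only [Function.comp_apply, hCdef]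
    field_simp
    ring
  have hb : Tendsto (fun r => Ψr r (k*r) / r^2) l (𝓝 D) := by
    have h1 := (hΨr.comp_tendsto hmap).trans_isBigO (hbd 2)
    have h2 := h1.tendsto_div_nhds_zero
    have h3 := h2.add (tendsto_const_nhds (x := D))
    rw [zero_add] at h3
    refine h3.congr' ?_
    filter_upwards [hrpos] with r hr
    have hr2 : r^2 ≠ 0 := by positivity
    simp only [Function.comp_apply, hDdef]
    field_simp
    ring
  have he : Tendsto (fun r => (Y r (k*r) - 1) / r^2) l (𝓝 E) := by
    have h1 := (hY.comp_tendsto hmap).trans_isBigO (hbd 2)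
    have h2 := h1.tendsto_div_nhds_zero
    have h3 := h2.add (tendsto_const_nhds (x := E))
    rw [zero_add] at h3
    refine h3.congr' ?_
    filter_upwards [hrpos] with r hr
    have hr2 : r^2 ≠ 0 := by positivity
    simp only [Function.comp_apply, hEdef]
    field_simp
    ring
  have hc : Tendsto (fun r => Q r / r^3) l (𝓝 q0) := by
    have h2 := hQ.tendsto_div_nhds_zero
    have h3 := h2.add (tendsto_const_nhds (x := q0))
    rw [zero_add] at h3
    refine h3.congr' ?_
    filter_upwards [hrpos] with r hr
    have hr3 : r^3 ≠ 0 := by positivity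
    field_simp
    ring
  have hc' : Tendsto (fun r => Q' r / r^2) l (𝓝 (3*q0)) := by
    have h2 := hQ'.tendsto_div_nhds_zero
    have h3 := h2.add (tendsto_const_nhds (x := 3*q0))
    rw [zero_add] at h3
    refine h3.congr' ?_
    filter_upwards [hrpos] with r hr
    have hr2 : r^2 ≠ 0 := by positivity
    field_simp
    ring
  -- eventually Ψr ≠ 0
  have hbpos : ∀ᶠ r in l, 0 < Ψr r (k*r) / r^2 := hb.eventually (eventually_gt_nhds hD)
  -- abbreviations
  set a : ℝ → ℝ := fun r => Ψ r (k*r) / r^3 with hadef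
  set b : ℝ → ℝ := fun r => Ψr r (k*r) / r^2 with hbdef
  set c : ℝ → ℝ := fun r => Q r / r^3 with hcdef
  set c' : ℝ → ℝ := fun r => Q' r / r^2 with hc'def
  set e : ℝ → ℝ := fun r => (Y r (k*r) - 1) / r^2 with hedef
  set v : ℝ → ℝ := fun r => c r * c' r / (k * b r) with hvdef
  have hv : Tendsto v l (𝓝 (q0 * (3*q0) / (k*D))) :=
    (hc.mul hc').div (tendsto_const_nhds.mul hb) (by positivity)
  have hid : Tendsto (fun r : ℝ => r) l (𝓝 0) :=
    tendsto_id.mono_left nhdsWithin_le_nhds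
  set G : ℝ → ℝ := fun r =>
    2 * a r - (c r)^2 * r^2 / k
      + k * ((e r - v r - v r * e r * r^2) * ((1 - v r * r^2) * (e r * r^2 + 1) + 1))
    with hGdef
  have hG : Tendsto G l (𝓝 (2*C - q0^2 * 0^2 / k
      + k * ((E - q0*(3*q0)/(k*D) - q0*(3*q0)/(k*D) * E * 0^2)
        * ((1 - q0*(3*q0)/(k*D) * 0^2) * (E * 0^2 + 1) + 1)))) := by
    apply Tendsto.add
    · exact ((ha.const_mul 2).sub (((hc.pow 2).mul (hid.pow 2)).div_const k))
    · exact (tendsto_const_nhds.mul (((he.sub hv).sub ((hv.mul he).mul (hid.pow 2))).mul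
        (((tendsto_const_nhds.sub (hv.mul (hid.pow 2))).mul
          ((he.mul (hid.pow 2)).add tendsto_const_nhds)).add tendsto_const_nhds)))
  have hGlim : (2*C - q0^2 * 0^2 / k
      + k * ((E - q0*(3*q0)/(k*D) - q0*(3*q0)/(k*D) * E * 0^2)
        * ((1 - q0*(3*q0)/(k*D) * 0^2) * (E * 0^2 + 1) + 1)))
      = 2 * Apoly ψ30 ψ21 ψ12 ψ03 y20 y11 y02 q0 k / D := by
    rw [Apoly, hDdef, hCdef, hEdef]
    have hD' : 3*ψ30 + 2*k*ψ21 + k^2*ψ12 ≠ 0 := hDne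
    rw [eq_div_iff hD']
    generalize hX : 3*ψ30 + 2*k*ψ21 + k^2*ψ12 = X at hD' ⊢
    field_simp
    rw [← hX]
    ring
  rw [← hGlim]
  refine hG.congr' ?_
  filter_upwards [hrpos, hbpos] with r hr hbr
  have hrne : r ≠ 0 := ne_of_gt hr
  have hbne : b r ≠ 0 := ne_of_gt hbr
  have hΨrne : Ψr r (k*r) ≠ 0 := by
    intro h
    apply hbne
    simp only [hbdef, h, zero_div]
  have hkr : k * r ≠ 0 := by positivity
  simp only [hGdef, hadef, hbdef, hcdef, hc'def, hedef, hvdef, u1sq]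
  field_simp
  ring
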